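/- Let A : H → Set H be maximally monotone and B : H → H be monotone and μ-Lipschitz with μ ≥ 0. Then A + B (defined by (A+B)x = {u + Bx : u ∈ A x}) is maximally monotone. -/

import Mathlib

open RealInnerProductSpace

/-- A set-valued operator on a real Hilbert space is monotone. -/
def IsMonotoneOp {H : Type*} [NormedAddCommGroup H] [InnerProductSpace ℝ H]
    (A : H → Set H) : Prop :=
  ∀ x y u v, u ∈ A x → v ∈ A y → 0 ≤ ⟪x - y, u - v⟫

/-- A set-valued operator is maximally monotone: it is monotone and its graph is not
properly contained in the graph of any monotone operator. -/
def IsMaxMonotoneOp {H : Type*} [NormedAddCommGroup H] [InnerProductSpace ℝ H]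
    (A : H → Set H) : Prop :=
  IsMonotoneOp A ∧ ∀ B : H → Set H, IsMonotoneOp B → (∀ x, A x ⊆ B x) → ∀ x, A x = B x

section MaxMonoAux

variable {H : Type*} [NormedAddCommGroup H] [InnerProductSpace ℝ H]

lemma mem_of_related {A : H → Set H} (hA : IsMaxMonotoneOp A) (x u : H)
    (h : ∀ y v, v ∈ A y → 0 ≤ ⟪x - y, u - v⟫) : u ∈ A x := by
  have hmono : IsMonotoneOp (fun z => A z ∪ {w | z = x ∧ w = u}) := by
    rintro a b p q (hp | ⟨ha, hp⟩) (hq | ⟨hb, hq⟩)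
    · exact hA.1 a b p q hp hq
    · rw [hb, hq]
      have h1 := h a p hp
      rwa [← neg_sub a x, ← neg_sub p u, inner_neg_neg] at h1
    · rw [ha, hp]
      exact h b q hq
    · rw [ha, hp, hb, hq]
      simp
  have := hA.2 _ hmono (fun z => Set.subset_union_left) x
  rw [this]; right; exact ⟨rfl, rfl⟩

lemma max_of_surj {M : H → Set H} (hmono : IsMonotoneOp M) (lam : ℝ) (hlam : 0 < lam)
    (hsurj : ∀ z : H, ∃ x u, u ∈ M x ∧ x + lam • u = z) : IsMaxMonotoneOp M := by
  refine ⟨hmono, fun C hC hsub x => Set.Subset.antisymm (hsub x) fun w hw => ?_⟩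
  obtain ⟨x', u', hu', hx'⟩ := hsurj (x + lam • w)
  have h1 : 0 ≤ ⟪x - x', w - u'⟫ := hC x x' w u' hw (hsub x' hu')
  have h2 : x - x' = lam • (u' - w) := by
    rw [smul_sub, sub_eq_sub_iff_add_eq_add, ← hx']; abel
  rw [h2, real_inner_smul_left, ← neg_sub w u', inner_neg_left,
    real_inner_self_eq_norm_sq] at h1
  have h3 : ‖w - u'‖ ^ 2 ≤ 0 := by nlinarith
  have h4 : w = u' := by
    have := norm_nonneg (w - u')
    have : ‖w - u'‖ = 0 := by nlinarith
    rwa [norm_sub_eq_zero_iff] at this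
  subst h4
  have h5 : x = x' := by
    have : x - x' = 0 := by rw [h2]; simp
    rwa [sub_eq_zero] at this
  rwa [h5]

lemma graph_nonempty {M : H → Set H} (hM : IsMaxMonotoneOp M) : ∃ y v, v ∈ M y := by
  by_contra hc
  push_neg at hc
  have hmono : IsMonotoneOp (fun _ : H => ({0} : Set H)) := by
    intro x y u v hu hv
    simp only [Set.mem_singleton_iff] at hu hv
    simp [hu, hv]
  have := hM.2 _ hmono (fun x w hw => absurd hw (hc x w)) 0
  simp only [Set.eq_singleton_iff_unique_mem] at this
  exact hc 0 0 this.1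

set_option maxHeartbeats 1000000 in
lemma minty_zero [CompleteSpace H] {M : H → Set H} (hM : IsMaxMonotoneOp M) :
    ∃ x u, u ∈ M x ∧ x + u = 0 := by
  obtain ⟨y₀, v₀, hv₀⟩ := graph_nonempty hM
  have hφgraph : ∀ y v, v ∈ M y → ∀ y' v', v' ∈ M y' →
      ⟪y, v'⟫ + ⟪y', v⟫ - ⟪y', v'⟫ ≤ ⟪y, v⟫ := by
    intro y v hv y' v' hv'
    have h0 := hM.1 y y' v v' hv hv'
    simp only [inner_sub_left, inner_sub_right] at h0
    linarith
  set S : Set ℝ := {s | ∃ (x u : H) (r : ℝ),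
      (∀ y v, v ∈ M y → ⟪x, v⟫ + ⟪y, u⟫ - ⟪y, v⟫ ≤ r) ∧
      s = r + ‖x‖ ^ 2 / 2 + ‖u‖ ^ 2 / 2} with hSdef
  have hne : S.Nonempty :=
    ⟨_, y₀, v₀, ⟪y₀, v₀⟫, fun y v hv => hφgraph y₀ v₀ hv₀ y v hv, rfl⟩
  have hbdd : BddBelow S := by
    refine ⟨-(‖y₀‖ ^ 2 / 2 + ‖v₀‖ ^ 2 / 2 + ⟪y₀, v₀⟫), ?_⟩
    rintro s ⟨x, u, r, hr, rfl⟩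
    have h1 := hr y₀ v₀ hv₀
    have h2 := abs_le.mp (abs_real_inner_le_norm x v₀)
    have h3 := abs_le.mp (abs_real_inner_le_norm y₀ u)
    nlinarith [sq_nonneg (‖x‖ - ‖v₀‖), sq_nonneg (‖u‖ - ‖y₀‖)]
  set β := sInf S with hβdef
  have hβle : ∀ s ∈ S, β ≤ s := fun s hs => csInf_le hbdd hs
  have hseq : ∀ n : ℕ, ∃ (x u : H) (r : ℝ),
      (∀ y v, v ∈ M y → ⟪x, v⟫ + ⟪y, u⟫ - ⟪y, v⟫ ≤ r) ∧
      r + ‖x‖ ^ 2 / 2 + ‖u‖ ^ 2 / 2 < β + 1 / (n + 1) := by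
    intro n
    have hpos : (0 : ℝ) < 1 / ((n : ℝ) + 1) := by positivity
    obtain ⟨s, hsS, hslt⟩ := exists_lt_of_csInf_lt hne
      (show β < β + 1 / ((n : ℝ) + 1) by linarith)
    obtain ⟨x, u, r, hr, rfl⟩ := hsS
    exact ⟨x, u, r, hr, hslt⟩
  choose X U R hTm hTlt using hseq
  -- midpoint estimate
  have hmid : ∀ n m : ℕ, ‖X n - X m‖ ^ 2 + ‖U n - U m‖ ^ 2 ≤
      8 * (1 / ((n : ℝ) + 1) + 1 / ((m : ℝ) + 1)) := by
    intro n m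
    have hmem : ((R n + R m) / 2 + ‖(2 : ℝ)⁻¹ • (X n + X m)‖ ^ 2 / 2
        + ‖(2 : ℝ)⁻¹ • (U n + U m)‖ ^ 2 / 2) ∈ S := by
      refine ⟨_, _, _, fun y v hv => ?_, rfl⟩
      have h1 := hTm n y v hv
      have h2 := hTm m y v hv
      simp only [inner_add_left, inner_add_right, real_inner_smul_left, real_inner_smul_right]
      linarith
    have hβ := hβle _ hmem
    have hpx := parallelogram_law_with_norm ℝ (X n) (X m)
    have hpu := parallelogram_law_with_norm ℝ (U n) (U m)
    have ex : ‖(2 : ℝ)⁻¹ • (X n + X m)‖ = 2⁻¹ * ‖X n + X m‖ := by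
      rw [norm_smul]; norm_num
    have eu : ‖(2 : ℝ)⁻¹ • (U n + U m)‖ = 2⁻¹ * ‖U n + U m‖ := by
      rw [norm_smul]; norm_num
    have e1 : ‖(2 : ℝ)⁻¹ • (X n + X m)‖ ^ 2
        = (‖X n‖ ^ 2 + ‖X m‖ ^ 2) / 2 - ‖X n - X m‖ ^ 2 / 4 := by
      rw [ex]; linear_combination hpx / 4
    have e2 : ‖(2 : ℝ)⁻¹ • (U n + U m)‖ ^ 2
        = (‖U n‖ ^ 2 + ‖U m‖ ^ 2) / 2 - ‖U n - U m‖ ^ 2 / 4 := by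
      rw [eu]; linear_combination hpu / 4
    have h1 := hTlt n
    have h2 := hTlt m
    have hp1 : (0:ℝ) < 1 / ((n : ℝ) + 1) := by positivity
    have hp2 : (0:ℝ) < 1 / ((m : ℝ) + 1) := by positivity
    rw [e1, e2] at hβ
    linarith
  -- Cauchy sequences
  have hcauchy : ∀ Y : ℕ → H,
      (∀ n m : ℕ, ‖Y n - Y m‖ ^ 2 ≤ 8 * (1 / ((n : ℝ) + 1) + 1 / ((m : ℝ) + 1))) →
      CauchySeq Y := by
    intro Y hY
    rw [Metric.cauchySeq_iff]
    intro ε hε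
    obtain ⟨N, hN⟩ := exists_nat_gt (16 / ε ^ 2)
    refine ⟨N, fun n hn m hm => ?_⟩
    have h8 : (0 : ℝ) < (N : ℝ) + 1 := by positivity
    have hn' : ((N : ℝ)) ≤ (n : ℝ) := Nat.cast_le.mpr hn
    have hm' : ((N : ℝ)) ≤ (m : ℝ) := Nat.cast_le.mpr hm
    have h1 : (1 : ℝ) / ((n : ℝ) + 1) ≤ 1 / ((N : ℝ) + 1) :=
      one_div_le_one_div_of_le h8 (by linarith)
    have h2 : (1 : ℝ) / ((m : ℝ) + 1) ≤ 1 / ((N : ℝ) + 1) :=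
      one_div_le_one_div_of_le h8 (by linarith)
    have h3 : ‖Y n - Y m‖ ^ 2 ≤ 16 / ((N : ℝ) + 1) := by
      have h30 := hY n m
      have h31 : 8 * (1 / ((n : ℝ) + 1) + 1 / ((m : ℝ) + 1)) ≤ 16 / ((N : ℝ) + 1) := by
        rw [show (16:ℝ) / ((N : ℝ) + 1) = 8 * (1 / ((N : ℝ) + 1) + 1 / ((N : ℝ) + 1)) by ring]
        linarith
      linarith
    have hε2 : (0 : ℝ) < ε ^ 2 := by positivity
    have h4 : 16 / ((N : ℝ) + 1) < ε ^ 2 := by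
      rw [div_lt_iff₀ h8]
      rw [div_lt_iff₀ hε2] at hN
      nlinarith
    rw [dist_eq_norm]
    exact lt_of_pow_lt_pow_left₀ 2 hε.le (lt_of_le_of_lt h3 h4)
  have hXc : CauchySeq X := hcauchy X fun n m => by nlinarith [hmid n m, sq_nonneg ‖U n - U m‖]
  have hUc : CauchySeq U := hcauchy U fun n m => by nlinarith [hmid n m, sq_nonneg ‖X n - X m‖]
  obtain ⟨xb, hxlim⟩ := cauchySeq_tendsto_of_complete hXc
  obtain ⟨ub, hulim⟩ := cauchySeq_tendsto_of_complete hUc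
  set Fb : ℝ := β - ‖xb‖ ^ 2 / 2 - ‖ub‖ ^ 2 / 2 with hFbdef
  -- limit inequality
  have hstar : ∀ y v, v ∈ M y → ⟪xb, v⟫ + ⟪y, ub⟫ - ⟪y, v⟫ ≤ Fb := by
    intro y v hv
    have hb : ∀ n, ⟪X n, v⟫ + ⟪y, U n⟫ - ⟪y, v⟫ + ‖X n‖ ^ 2 / 2 + ‖U n‖ ^ 2 / 2
        ≤ β + 1 / ((n : ℝ) + 1) := by
      intro n
      have := hTm n y v hv
      have := hTlt n
      linarith
    have hl : Filter.Tendsto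
        (fun n => ⟪X n, v⟫ + ⟪y, U n⟫ - ⟪y, v⟫ + ‖X n‖ ^ 2 / 2 + ‖U n‖ ^ 2 / 2)
        Filter.atTop
        (nhds (⟪xb, v⟫ + ⟪y, ub⟫ - ⟪y, v⟫ + ‖xb‖ ^ 2 / 2 + ‖ub‖ ^ 2 / 2)) := by
      exact ((((hxlim.inner tendsto_const_nhds).add
        (tendsto_const_nhds.inner hulim)).sub tendsto_const_nhds).add
        ((hxlim.norm.pow 2).div_const 2)).add ((hulim.norm.pow 2).div_const 2)
    have hr : Filter.Tendsto (fun n : ℕ => β + 1 / ((n : ℝ) + 1)) Filter.atTop (nhds β) := by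
      have := tendsto_one_div_add_atTop_nhds_zero_nat (𝕜 := ℝ)
      simpa using Filter.Tendsto.add (tendsto_const_nhds (x := β)) this
    have := le_of_tendsto_of_tendsto' hl hr hb
    rw [hFbdef]; linarith
  -- Fb ≥ inner
  have hii : ⟪xb, ub⟫ ≤ Fb := by
    by_contra hc
    push_neg at hc
    have hmem : ub ∈ M xb := by
      apply mem_of_related hM
      intro y v hv
      have h1 := hstar y v hv
      simp only [inner_sub_left, inner_sub_right]
      linarith
    have := hstar xb ub hmem
    linarith
  -- first-order condition
  have hi : ∀ y v, v ∈ M y → Fb - ⟪xb, y - xb⟫ - ⟪ub, v - ub⟫ ≤ ⟪y, v⟫ := by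
    intro y v hv
    have hkey : ∀ t : ℝ, 0 < t → t ≤ 1 →
        β ≤ ((1 - t) * Fb + t * ⟪y, v⟫) + ‖xb + t • (y - xb)‖ ^ 2 / 2
          + ‖ub + t • (v - ub)‖ ^ 2 / 2 := by
      intro t ht ht1
      apply hβle
      refine ⟨xb + t • (y - xb), ub + t • (v - ub), (1 - t) * Fb + t * ⟪y, v⟫,
        fun y' v' hv' => ?_, rfl⟩
      have h1 := hstar y' v' hv'
      have h2 := hφgraph y v hv y' v' hv'
      have e1 : ⟪xb + t • (y - xb), v'⟫ + ⟪y', ub + t • (v - ub)⟫ - ⟪y', v'⟫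
          = (1 - t) * (⟪xb, v'⟫ + ⟪y', ub⟫ - ⟪y', v'⟫)
            + t * (⟪y, v'⟫ + ⟪y', v⟫ - ⟪y', v'⟫) := by
        simp only [inner_add_left, inner_add_right, real_inner_smul_left,
          real_inner_smul_right, inner_sub_left, inner_sub_right]
        ring
      rw [e1]
      nlinarith
    have hx2 : ∀ t : ℝ, ‖xb + t • (y - xb)‖ ^ 2
        = ‖xb‖ ^ 2 + 2 * t * ⟪xb, y - xb⟫ + t ^ 2 * ‖y - xb‖ ^ 2 := by
      intro t
      rw [norm_add_sq_real, real_inner_smul_right, norm_smul, Real.norm_eq_abs, mul_pow, sq_abs]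
      ring
    have hu2 : ∀ t : ℝ, ‖ub + t • (v - ub)‖ ^ 2
        = ‖ub‖ ^ 2 + 2 * t * ⟪ub, v - ub⟫ + t ^ 2 * ‖v - ub‖ ^ 2 := by
      intro t
      rw [norm_add_sq_real, real_inner_smul_right, norm_smul, Real.norm_eq_abs, mul_pow, sq_abs]
      ring
    have ha : ∀ t : ℝ, 0 < t → t ≤ 1 →
        0 ≤ t * (⟪y, v⟫ - Fb + ⟪xb, y - xb⟫ + ⟪ub, v - ub⟫)
          + t ^ 2 * ((‖y - xb‖ ^ 2 + ‖v - ub‖ ^ 2) / 2) := by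
      intro t ht ht1
      have hk := hkey t ht ht1
      rw [hx2 t, hu2 t] at hk
      rw [hFbdef] at hk ⊢
      ring_nf at hk ⊢
      linarith
    by_contra hcon
    push_neg at hcon
    set a : ℝ := ⟪y, v⟫ - Fb + ⟪xb, y - xb⟫ + ⟪ub, v - ub⟫ with hadef
    set c : ℝ := (‖y - xb‖ ^ 2 + ‖v - ub‖ ^ 2) / 2 with hcdef
    have hc0 : 0 ≤ c := by positivity
    have hneg : a < 0 := by rw [hadef]; linarith
    have htpos : 0 < min 1 (-a / (c + 1)) := by
      apply lt_min one_pos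
      have : 0 < -a := by linarith
      positivity
    have h0 := ha _ htpos (min_le_left _ _)
    have h5 : min 1 (-a / (c + 1)) ≤ -a / (c + 1) := min_le_right _ _
    have htc : min 1 (-a / (c + 1)) * c ≤ (-a / (c + 1)) * c :=
      mul_le_mul_of_nonneg_right h5 hc0
    have h6 : (-a / (c + 1)) * c < -a := by
      rw [div_mul_eq_mul_div, div_lt_iff₀ (by linarith : (0:ℝ) < c + 1)]
      nlinarith
    have h7 : a + min 1 (-a / (c + 1)) * c < 0 := by linarith
    nlinarith [mul_neg_of_pos_of_neg htpos h7]
  -- conclude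
  have hid : ‖xb + ub‖ ^ 2 = ‖xb‖ ^ 2 + 2 * ⟪xb, ub⟫ + ‖ub‖ ^ 2 := norm_add_sq_real _ _
  have hrel : ∀ y v, v ∈ M y → 0 ≤ ⟪-ub - y, -xb - v⟫ := by
    intro y v hv
    have h1 := hi y v hv
    have e0 : -ub - y = -(ub + y) := by abel
    have e1 : -xb - v = -(xb + v) := by abel
    rw [e0, e1, inner_neg_neg, inner_add_left, inner_add_right, inner_add_right]
    simp only [inner_sub_right, real_inner_self_eq_norm_sq] at h1
    have c1 : ⟪ub, xb⟫ = ⟪xb, ub⟫ := real_inner_comm _ _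
    have c2 : ⟪y, xb⟫ = ⟪xb, y⟫ := real_inner_comm _ _
    linarith [sq_nonneg ‖xb + ub‖, hii, hid, c1, c2, h1]
  have hm2 : -xb ∈ M (-ub) := mem_of_related hM _ _ hrel
  have h2 := hi _ _ hm2
  simp only [inner_sub_right, inner_neg_left, inner_neg_right,
    real_inner_self_eq_norm_sq] at h2
  have c1 : ⟪ub, xb⟫ = ⟪xb, ub⟫ := real_inner_comm _ _
  have hz : xb + ub = 0 := by
    have h3 : ‖xb + ub‖ ^ 2 ≤ 0 := by linarith [hii, hid, c1, h2]
    have h4 : ‖xb + ub‖ = 0 := sq_eq_zero_iff.mp (le_antisymm h3 (sq_nonneg _))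
    rwa [norm_eq_zero] at h4
  refine ⟨-ub, -xb, hm2, ?_⟩
  have : -ub + -xb = -(xb + ub) := by abel
  rw [this, hz, neg_zero]

lemma minty [CompleteSpace H] {M : H → Set H} (hM : IsMaxMonotoneOp M) (z : H) :
    ∃ x u, u ∈ M x ∧ x + u = z := by
  have hmono : IsMonotoneOp (fun x => {w | w + z ∈ M x}) := by
    intro x y u v hu hv
    have h0 := hM.1 x y (u + z) (v + z) hu hv
    simpa [add_sub_add_right_eq_sub] using h0
  have hmax : IsMaxMonotoneOp (fun x => {w | w + z ∈ M x}) := by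
    refine ⟨hmono, fun C hC hsub x => ?_⟩
    have hC' : IsMonotoneOp (fun a => {w | w - z ∈ C a}) := by
      intro a b p q hp hq
      have h0 := hC a b (p - z) (q - z) hp hq
      simpa [sub_sub_sub_cancel_right] using h0
    have hsub' : ∀ a, M a ⊆ {w | w - z ∈ C a} := by
      intro a w hw
      have : w - z ∈ {w | w + z ∈ M a} := by
        simp only [Set.mem_setOf_eq, sub_add_cancel]
        exact hw
      exact hsub a this
    have heq := hM.2 _ hC' hsub'
    apply Set.Subset.antisymm (hsub x)
    intro w hw
    have h1 : w + z ∈ {w | w - z ∈ C x} := by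
      simp only [Set.mem_setOf_eq, add_sub_cancel_right]
      exact hw
    rw [← heq x] at h1
    exact h1
  obtain ⟨x, u, hu, hxu⟩ := minty_zero hmax
  exact ⟨x, u + z, hu, by rw [← add_assoc, hxu, zero_add]⟩

lemma smul_max {M : H → Set H} (hM : IsMaxMonotoneOp M) (lam : ℝ) (hlam : 0 < lam) :
    IsMaxMonotoneOp (fun x => (lam • ·) '' M x) := by
  constructor
  · rintro x y u v ⟨p, hp, rfl⟩ ⟨q, hq, rfl⟩
    rw [← smul_sub, real_inner_smul_right]
    exact mul_nonneg hlam.le (hM.1 x y p q hp hq)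
  · intro C hC hsub x
    have hC' : IsMonotoneOp (fun a => (lam⁻¹ • ·) '' C a) := by
      rintro a b p q ⟨p', hp', rfl⟩ ⟨q', hq', rfl⟩
      rw [← smul_sub, real_inner_smul_right]
      exact mul_nonneg (by positivity) (hC a b p' q' hp' hq')
    have hsub' : ∀ a, M a ⊆ (lam⁻¹ • ·) '' C a := by
      intro a u hu
      exact ⟨lam • u, hsub a ⟨u, hu, rfl⟩, by show lam⁻¹ • lam • u = u; exact inv_smul_smul₀ hlam.ne' u⟩
    have heq := hM.2 _ hC' hsub' x
    apply Set.Subset.antisymm (hsub x)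
    intro w hw
    have h1 : lam⁻¹ • w ∈ M x := by rw [heq]; exact ⟨w, hw, rfl⟩
    exact ⟨lam⁻¹ • w, h1, by show lam • lam⁻¹ • w = w; exact smul_inv_smul₀ hlam.ne' w⟩

lemma sum_surj [CompleteSpace H] {A : H → Set H} (hA : IsMaxMonotoneOp A)
    (B : H → H) (μ : ℝ) (hμ : 0 ≤ μ)
    (hBlip : ∀ x y : H, ‖B x - B y‖ ≤ μ * ‖x - y‖) (lam : ℝ)
    (hlam : lam = 1 / (2 * (μ + 1))) :
    ∀ z : H, ∃ x a, a ∈ A x ∧ x + lam • (a + B x) = z := by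
  have hμ1 : (0:ℝ) < μ + 1 := by linarith
  have hlam0 : 0 < lam := by rw [hlam]; positivity
  have hAl := smul_max hA lam hlam0
  have hres : ∀ y : H, ∃ x w, w ∈ (fun x => (lam • ·) '' A x) x ∧ x + w = y :=
    fun y => minty hAl y
  choose J W hW1 hW2 using hres
  have hJlip : ∀ y y', ‖J y - J y'‖ ≤ ‖y - y'‖ := by
    intro y y'
    obtain ⟨p, hp, hpe⟩ := hW1 y
    obtain ⟨q, hq, hqe⟩ := hW1 y'
    have hm : 0 ≤ ⟪J y - J y', W y - W y'⟫ := by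
      rw [← hpe, ← hqe, ← smul_sub, real_inner_smul_right]
      exact mul_nonneg hlam0.le (hA.1 (J y) (J y') p q hp hq)
    have hinner : ‖J y - J y'‖ ^ 2 ≤ ⟪J y - J y', y - y'⟫ := by
      have e : y - y' = (J y - J y') + (W y - W y') := by
        conv_lhs => rw [← hW2 y, ← hW2 y']
        abel
      rw [e, inner_add_right, real_inner_self_eq_norm_sq]
      linarith
    have h2 := real_inner_le_norm (J y - J y') (y - y')
    rcases eq_or_lt_of_le (norm_nonneg (J y - J y')) with h0 | h0
    · rw [← h0]; exact norm_nonneg _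
    · nlinarith
  intro z
  have hcontr : ∀ x x', dist (J (z - lam • B x)) (J (z - lam • B x'))
      ≤ (1/2 : ℝ) * dist x x' := by
    intro x x'
    rw [dist_eq_norm, dist_eq_norm]
    have h1 := hJlip (z - lam • B x) (z - lam • B x')
    have e : (z - lam • B x) - (z - lam • B x') = lam • (B x' - B x) := by
      rw [smul_sub]; abel
    rw [e] at h1
    have h2 : ‖lam • (B x' - B x)‖ = lam * ‖B x' - B x‖ := by
      rw [norm_smul, Real.norm_eq_abs, abs_of_pos hlam0]
    have h3 := hBlip x' x
    have h4 : lam * μ ≤ 1/2 := by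
      rw [hlam, div_mul_eq_mul_div, div_le_div_iff₀ (by positivity) (by norm_num)]
      nlinarith
    have h5 : ‖x' - x‖ = ‖x - x'‖ := norm_sub_rev _ _
    have h6 : lam * ‖B x' - B x‖ ≤ lam * (μ * ‖x' - x‖) :=
      mul_le_mul_of_nonneg_left h3 hlam0.le
    have h7 : (lam * μ) * ‖x - x'‖ ≤ (1/2) * ‖x - x'‖ :=
      mul_le_mul_of_nonneg_right h4 (norm_nonneg _)
    nlinarith
  haveI : Nonempty H := ⟨0⟩
  have hcw : ContractingWith (1/2 : NNReal) (fun x => J (z - lam • B x)) := by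
    constructor
    · rw [← NNReal.coe_lt_coe, NNReal.coe_one]
      norm_num
    · apply LipschitzWith.of_dist_le_mul
      intro x x'
      have hK : ((1/2 : NNReal) : ℝ) = 1/2 := by norm_num
      rw [hK]
      exact hcontr x x'
  set x := hcw.fixedPoint (fun x => J (z - lam • B x)) with hxdef
  have hfix : J (z - lam • B x) = x := hcw.fixedPoint_isFixedPt
  obtain ⟨a, ha, hae⟩ := hW1 (z - lam • B x)
  have he := hW2 (z - lam • B x)
  rw [hfix, ← hae] at he
  -- he : x + lam • a = z - lam • B x
  refine ⟨x, a, by rwa [hfix] at ha, ?_⟩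
  rw [smul_add, ← add_assoc, he]
  abel

end MaxMonoAux

theorem stmt12 {H : Type*} [NormedAddCommGroup H] [InnerProductSpace ℝ H] [CompleteSpace H]
    (A : H → Set H) (hA : IsMaxMonotoneOp A)
    (B : H → H) (μ : ℝ) (hμ : 0 ≤ μ)
    (hBmono : ∀ x y : H, 0 ≤ ⟪x - y, B x - B y⟫)
    (hBlip : ∀ x y : H, ‖B x - B y‖ ≤ μ * ‖x - y‖) :
    IsMaxMonotoneOp (fun x => (fun u => u + B x) '' A x) := by
  have hμ1 : (0:ℝ) < μ + 1 := by linarith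
  have hlam0 : (0:ℝ) < 1 / (2 * (μ + 1)) := by positivity
  have hmono : IsMonotoneOp (fun x => (fun u => u + B x) '' A x) := by
    rintro x y u v ⟨p, hp, rfl⟩ ⟨q, hq, rfl⟩
    have e : (p + B x) - (q + B y) = (p - q) + (B x - B y) := by abel
    rw [e, inner_add_right]
    exact add_nonneg (hA.1 x y p q hp hq) (hBmono x y)
  apply max_of_surj hmono (1 / (2 * (μ + 1))) hlam0
  intro z
  obtain ⟨x, a, ha, hxa⟩ := sum_surj hA B μ hμ hBlip (1 / (2 * (μ + 1))) rfl z
  exact ⟨x, a + B x, ⟨a, ha, rfl⟩, hxa⟩
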